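/- Let β > 0, s ≥ 0 and n ∈ ℕ. Define Q_0(t) := exp( −(n/2) ∫_0^t (β+S_u) du ) and, recursively for 1 ≤ i ≤ n, Q_i(t) := ∫_0^t Q_{i−1}(r) · ((n−i+1)/2)(β+S_r) · exp( −((n−i)/2) ∫_r^t (β+S_u) du ) dr. Then for every 0 ≤ i ≤ n and every t ≥ 0: Q_i(t) = binom(n, i) p(t)^{n−i} (1 − p(t))^i. Hence the pure-death process which, in state k, jumps to k−1 at time-inhomogeneous rate k(β+S_t)/2, when started from n, is in state n−i at time t with the binomial probability Bin(n−i; n, p(t)) — the key fact yielding the binomial mixing weights in Proposition 4.2. -/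

import Mathlib

open MeasureTheory intervalIntegral

noncomputable def Sfun (β s t : ℝ) : ℝ :=
  β * s / ((β + s) * Real.exp (β * t / 2) - s)

noncomputable def pfun (β s t : ℝ) : ℝ :=
  β / ((β + s) * Real.exp (β * t / 2) - s)

noncomputable def Qfun (β s : ℝ) (n : ℕ) : ℕ → ℝ → ℝ
  | 0, t => Real.exp (-((n : ℝ) / 2) * ∫ u in (0 : ℝ)..t, (β + Sfun β s u))
  | i + 1, t => ∫ r in (0 : ℝ)..t,
      Qfun β s n i r * (((n : ℝ) - (i : ℝ)) / 2 * (β + Sfun β s r)) *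
        Real.exp (-(((n : ℝ) - (i : ℝ) - 1) / 2) * ∫ u in r..t, (β + Sfun β s u))

noncomputable def Dfun (β s t : ℝ) : ℝ := (β + s) * Real.exp (β * t / 2) - s

lemma D_pos {β s : ℝ} (hβ : 0 < β) (hs : 0 ≤ s) {t : ℝ} (ht : 0 ≤ t) :
    0 < Dfun β s t := by
  have h1 : (1:ℝ) ≤ Real.exp (β * t / 2) := by
    rw [← Real.exp_zero]
    exact Real.exp_le_exp.2 (by positivity)
  have : β + s ≤ (β + s) * Real.exp (β * t / 2) := by nlinarith
  unfold Dfun; linarith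

lemma D_zero (β s : ℝ) : Dfun β s 0 = β := by simp [Dfun]

lemma D_hasDeriv (β s t : ℝ) :
    HasDerivAt (Dfun β s) ((β + s) * (β / 2) * Real.exp (β * t / 2)) t := by
  have h : HasDerivAt (fun u : ℝ => β * u / 2) (β / 2) t := by
    simpa using ((hasDerivAt_id t).const_mul β).div_const 2
  have := ((h.exp).const_mul (β + s)).sub_const s
  exact this.congr_deriv (by ring)

lemma S_eq {β s : ℝ} (hβ : 0 < β) (hs : 0 ≤ s) {u : ℝ} (hu : 0 ≤ u) :
    β + Sfun β s u = 2 * ((β + s) * (β / 2) * Real.exp (β * u / 2) / Dfun β s u) := by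
  have hD := D_pos hβ hs hu
  unfold Sfun Dfun at *
  field_simp
  ring

lemma log_hasDeriv {β s : ℝ} (hβ : 0 < β) (hs : 0 ≤ s) {u : ℝ} (hu : 0 ≤ u) :
    HasDerivAt (fun v => 2 * Real.log (Dfun β s v)) (β + Sfun β s u) u := by
  have hD := D_pos hβ hs hu
  have h := ((D_hasDeriv β s u).log hD.ne').const_mul 2
  rw [S_eq hβ hs hu]
  exact h

lemma contOn (β s : ℝ) (hβ : 0 < β) (hs : 0 ≤ s) :
    ContinuousOn (fun u => β + Sfun β s u) (Set.Ici 0) := by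
  apply continuousOn_const.add
  unfold Sfun
  apply ContinuousOn.div continuousOn_const
  · fun_prop
  · intro u hu
    exact (D_pos hβ hs hu).ne'

lemma uIcc_sub {r t : ℝ} (hr : 0 ≤ r) (ht : 0 ≤ t) : Set.uIcc r t ⊆ Set.Ici 0 := by
  intro x hx
  rw [Set.mem_uIcc] at hx
  rcases hx with ⟨h1, _⟩ | ⟨h1, _⟩ <;> simp only [Set.mem_Ici] <;> linarith

lemma integral_S {β s : ℝ} (hβ : 0 < β) (hs : 0 ≤ s) {r t : ℝ} (hr : 0 ≤ r) (ht : 0 ≤ t) :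
    (∫ u in r..t, (β + Sfun β s u)) =
      2 * (Real.log (Dfun β s t) - Real.log (Dfun β s r)) := by
  have := intervalIntegral.integral_eq_sub_of_hasDerivAt
    (f := fun v => 2 * Real.log (Dfun β s v)) (a := r) (b := t)
    (fun x hx => log_hasDeriv hβ hs (uIcc_sub hr ht hx))
    (((contOn β s hβ hs).mono (uIcc_sub hr ht)).intervalIntegrable)
  rw [this]; ring

/-- The pure-death process started from `n` is in state `n - i` at time `t` with binomial
probability `Bin(n-i; n, p(t))` — the key fact yielding the binomial mixing weights in
Proposition 4.2. -/
theorem stmt9 (β : ℝ) (hβ : 0 < β) (s : ℝ) (hs : 0 ≤ s) (n : ℕ) :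
    ∀ i : ℕ, i ≤ n → ∀ t : ℝ, 0 ≤ t →
      Qfun β s n i t = (n.choose i : ℝ) * pfun β s t ^ (n - i) * (1 - pfun β s t) ^ i := by
  intro i
  induction i with
  | zero =>
    intro _ t ht
    have hDt := D_pos hβ hs ht
    simp only [Qfun, integral_S hβ hs le_rfl ht, D_zero]
    have h1 : -((n : ℝ) / 2) * (2 * (Real.log (Dfun β s t) - Real.log β)) =
        (n : ℝ) * (Real.log β - Real.log (Dfun β s t)) := by ring
    rw [h1, Real.exp_nat_mul, Real.exp_sub, Real.exp_log hβ, Real.exp_log hDt]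
    have hp : pfun β s t = β / Dfun β s t := rfl
    simp [hp]
  | succ i ih =>
    intro h t ht
    have hin : i < n := h
    have hi1 : i + 1 ≤ n := h
    have hDt := D_pos hβ hs ht
    set m : ℕ := n - (i + 1) with hm
    have hni : n - i = m + 1 := by omega
    -- the antiderivative
    set F : ℝ → ℝ := fun r =>
      (n.choose (i+1) : ℝ) * (β / Dfun β s t) ^ m * (1 - β / Dfun β s r) ^ (i+1) with hF
    -- cast facts
    have hmc : ((n : ℝ) - (i : ℝ) - 1) = (m : ℝ) := by
      rw [hm]; push_cast [Nat.cast_sub hi1]; ring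
    have hic : ((i : ℝ) : ℝ) < (n : ℝ) := by exact_mod_cast hin
    have hnid : ((n : ℝ) - (i : ℝ)) ≠ 0 := by intro hc; nlinarith
    have hchoose : (n.choose (i+1) : ℝ) * ((i : ℝ) + 1) = (n.choose i : ℝ) * ((n : ℝ) - (i : ℝ)) := by
      have := Nat.choose_succ_right_eq n i
      have h2 : ((n.choose (i+1) * (i+1) : ℕ) : ℝ) = ((n.choose i * (n - i) : ℕ) : ℝ) := by
        rw [this]
      push_cast [Nat.cast_sub hin.le] at h2
      linarith
    have hCi : (n.choose i : ℝ) = (n.choose (i+1) : ℝ) * ((i : ℝ) + 1) / ((n : ℝ) - (i : ℝ)) := by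
      field_simp
      linarith [hchoose]
    -- pointwise identification of the integrand with the derivative of F
    have hF' : ∀ r ∈ Set.uIcc (0:ℝ) t, HasDerivAt F
        (Qfun β s n i r * (((n : ℝ) - (i : ℝ)) / 2 * (β + Sfun β s r)) *
          Real.exp (-(((n : ℝ) - (i : ℝ) - 1) / 2) * ∫ u in r..t, (β + Sfun β s u))) r := by
      intro r hr
      have hr0 : 0 ≤ r := uIcc_sub le_rfl ht hr
      have hDr := D_pos hβ hs hr0
      -- derivative computation
      have h1 : HasDerivAt (fun v => 1 - β / Dfun β s v)
          (β * ((β + s) * (β / 2) * Real.exp (β * r / 2)) / (Dfun β s r)^2) r := by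
        have hd := ((hasDerivAt_const r β).div (D_hasDeriv β s r) hDr.ne').const_sub 1
        exact hd.congr_deriv (by ring)
      have h2 := h1.pow (i+1)
      have h3 := h2.const_mul ((n.choose (i+1) : ℝ) * (β / Dfun β s t) ^ m)
      have h4 : HasDerivAt F
          ((n.choose (i+1) : ℝ) * (β / Dfun β s t) ^ m *
            (((i:ℝ)+1) * (1 - β / Dfun β s r) ^ i *
              (β * ((β + s) * (β / 2) * Real.exp (β * r / 2)) / (Dfun β s r)^2))) r := by
        simpa [hF] using h3
      convert h4 using 1
      -- now identify values
      rw [ih hin.le r hr0, integral_S hβ hs hr0 ht, S_eq hβ hs hr0]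
      have he : -(((n : ℝ) - (i : ℝ) - 1) / 2) *
          (2 * (Real.log (Dfun β s t) - Real.log (Dfun β s r))) =
          (m : ℝ) * Real.log (Dfun β s r / Dfun β s t) := by
        rw [hmc, Real.log_div hDr.ne' hDt.ne']; ring
      rw [he, Real.exp_nat_mul, Real.exp_log (by positivity)]
      have hp : pfun β s r = β / Dfun β s r := rfl
      rw [hp, hni, hCi]
      have hE : (0:ℝ) < Real.exp (β * r / 2) := Real.exp_pos _
      field_simp
      rw [div_pow, div_pow, div_pow, pow_succ]
      field_simp
      rw [div_pow]
      field_simp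
      ring
    -- integrability of the integrand
    have hInt : IntervalIntegrable (fun r =>
        Qfun β s n i r * (((n : ℝ) - (i : ℝ)) / 2 * (β + Sfun β s r)) *
          Real.exp (-(((n : ℝ) - (i : ℝ) - 1) / 2) * ∫ u in r..t, (β + Sfun β s u)))
        MeasureTheory.volume 0 t := by
      apply ContinuousOn.intervalIntegrable
      have hcg : ContinuousOn (fun r =>
          ((n.choose i : ℝ) * pfun β s r ^ (n - i) * (1 - pfun β s r) ^ i) *
            (((n : ℝ) - (i : ℝ)) / 2 * (β + Sfun β s r)) *
            Real.exp (-(((n : ℝ) - (i : ℝ) - 1) / 2) *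
              (2 * (Real.log (Dfun β s t) - Real.log (Dfun β s r))))) (Set.uIcc (0:ℝ) t) := by
        have hDne : ∀ r ∈ Set.uIcc (0:ℝ) t, Dfun β s r ≠ 0 := fun r hr =>
          (D_pos hβ hs (uIcc_sub le_rfl ht hr)).ne'
        have hDcont : ContinuousOn (Dfun β s) (Set.uIcc (0:ℝ) t) := by
          unfold Dfun; fun_prop
        have hpcont : ContinuousOn (pfun β s) (Set.uIcc (0:ℝ) t) :=
          continuousOn_const.div hDcont hDne
        have hScont : ContinuousOn (fun u => β + Sfun β s u) (Set.uIcc (0:ℝ) t) :=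
          (contOn β s hβ hs).mono (uIcc_sub le_rfl ht)
        apply ContinuousOn.mul
        apply ContinuousOn.mul
        · exact (continuousOn_const.mul (hpcont.pow _)).mul
            ((continuousOn_const.sub hpcont).pow _)
        · exact continuousOn_const.mul hScont
        · exact Real.continuous_exp.comp_continuousOn
            (continuousOn_const.mul (continuousOn_const.mul
              (continuousOn_const.sub (hDcont.log hDne))))
      apply hcg.congr
      intro r hr
      have hr0 : 0 ≤ r := uIcc_sub le_rfl ht hr
      simp only [ih hin.le r hr0, integral_S hβ hs hr0 ht]
    -- put it together
    simp only [Qfun]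
    rw [intervalIntegral.integral_eq_sub_of_hasDerivAt hF' hInt]
    have hF0 : F 0 = 0 := by
      simp [hF, D_zero, div_self hβ.ne']
    have hFt : F t = (n.choose (i+1) : ℝ) * pfun β s t ^ m * (1 - pfun β s t) ^ (i+1) := by
      have hp : pfun β s t = β / Dfun β s t := rfl
      simp [hF, hp]
    rw [hF0, hFt]
    ring
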